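/- The function ṗ(N) = 1 - γ(N, N-1)/Γ(N), defined for integers N ≥ 1 where γ is the lower incomplete gamma function, is strictly decreasing in N. -/

import Mathlib

/-- The lower incomplete gamma function γ(s, x) = ∫₀^x t^{s-1} e^{-t} dt. -/
noncomputable def lowerGamma (s x : ℝ) : ℝ :=
  ∫ t in Set.Ioo 0 x, t ^ (s - 1) * Real.exp (-t)

open MeasureTheory intervalIntegral Real Set

noncomputable def J (n : ℕ) : ℝ := ∫ t in (0:ℝ)..(n:ℝ), t ^ n * Real.exp (-t)

noncomputable def q (n : ℕ) : ℝ := J n / (n.factorial : ℝ)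

lemma contF (n : ℕ) : Continuous fun t : ℝ => t ^ n * Real.exp (-t) := by fun_prop

lemma hasDerivF (n : ℕ) (t : ℝ) :
    HasDerivAt (fun t : ℝ => t ^ (n+1) * Real.exp (-t))
      (((n:ℝ)+1) * t ^ n * Real.exp (-t) - t ^ (n+1) * Real.exp (-t)) t := by
  have h1 : HasDerivAt (fun t : ℝ => t ^ (n+1)) (((n:ℝ)+1) * t ^ n) t := by
    simpa using hasDerivAt_pow (n+1) t
  have h2 : HasDerivAt (fun t : ℝ => Real.exp (-t)) (-Real.exp (-t)) t := by
    simpa using (hasDerivAt_neg t).exp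
  have := h1.mul h2
  exact this.congr_deriv (by ring)

lemma ibp (a : ℝ) (n : ℕ) :
    ∫ t in (0:ℝ)..a, t ^ (n+1) * Real.exp (-t)
      = ((n:ℝ)+1) * (∫ t in (0:ℝ)..a, t ^ n * Real.exp (-t)) - a ^ (n+1) * Real.exp (-a) := by
  have key := intervalIntegral.integral_eq_sub_of_hasDerivAt
    (f := fun t : ℝ => t ^ (n+1) * Real.exp (-t)) (a := 0) (b := a)
    (fun t _ => hasDerivF n t)
    ((by fun_prop : Continuous fun t : ℝ =>
      ((n:ℝ)+1) * t ^ n * Real.exp (-t) - t ^ (n+1) * Real.exp (-t)).intervalIntegrable 0 a)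
  rw [intervalIntegral.integral_sub
      ((by fun_prop : Continuous fun t : ℝ => ((n:ℝ)+1) * t ^ n * Real.exp (-t)).intervalIntegrable 0 a)
      ((contF (n+1)).intervalIntegrable 0 a)] at key
  simp only [mul_assoc] at key
  rw [intervalIntegral.integral_const_mul] at key
  simp only [zero_pow (Nat.succ_ne_zero n), zero_mul, sub_zero] at key
  linarith

lemma hasDerivG (n : ℕ) (t : ℝ) :
    HasDerivAt (fun t : ℝ => t ^ n * Real.exp (-t))
      ((n:ℝ) * t ^ (n-1) * Real.exp (-t) - t ^ n * Real.exp (-t)) t := by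
  have h1 : HasDerivAt (fun t : ℝ => t ^ n) ((n:ℝ) * t ^ (n-1)) t := hasDerivAt_pow n t
  have h2 : HasDerivAt (fun t : ℝ => Real.exp (-t)) (-Real.exp (-t)) t := by
    simpa using (hasDerivAt_neg t).exp
  have := h1.mul h2
  exact this.congr_deriv (by ring)

lemma antiH (n : ℕ) :
    StrictAntiOn (fun t : ℝ => t ^ n * Real.exp (-t)) (Icc (n:ℝ) ((n:ℝ)+1)) := by
  apply strictAntiOn_of_deriv_neg (convex_Icc _ _) (contF n).continuousOn
  intro t ht
  rw [interior_Icc] at ht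
  rw [(hasDerivG n t).deriv]
  have het : 0 < Real.exp (-t) := Real.exp_pos _
  rcases Nat.eq_zero_or_pos n with h0 | hpos
  · subst h0; simp; positivity
  · have htn : (n:ℝ) < t := ht.1
    have ht0 : (0:ℝ) < t := lt_of_le_of_lt (Nat.cast_nonneg n) htn
    have hfac : t ^ n = t ^ (n-1) * t := by
      rw [← pow_succ]; congr 1; omega
    have hp : (0:ℝ) < t ^ (n-1) := pow_pos ht0 _
    rw [hfac]
    nlinarith [mul_pos (sub_pos.mpr htn) (mul_pos hp het)]

lemma key (n : ℕ) :
    ((n:ℝ)+1) ^ n * Real.exp (-((n:ℝ)+1))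
      < ∫ t in (n:ℝ)..((n:ℝ)+1), t ^ n * Real.exp (-t) := by
  have hab : (n:ℝ) < (n:ℝ)+1 := by linarith
  have hmem : ((n:ℝ)+1) ∈ Icc (n:ℝ) ((n:ℝ)+1) := ⟨le_of_lt hab, le_refl _⟩
  have h := intervalIntegral.integral_lt_integral_of_continuousOn_of_le_of_exists_lt
    (f := fun _ : ℝ => ((n:ℝ)+1) ^ n * Real.exp (-((n:ℝ)+1)))
    (g := fun t : ℝ => t ^ n * Real.exp (-t)) hab
    continuousOn_const (contF n).continuousOn
    (fun x hx => by
      rcases eq_or_lt_of_le hx.2 with he | hl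
      · simp [he]
      · exact le_of_lt (antiH n ⟨le_of_lt hx.1, le_of_lt hl⟩ hmem hl))
    ⟨(n:ℝ), ⟨le_refl _, le_of_lt hab⟩, antiH n ⟨le_refl _, le_of_lt hab⟩ hmem hab⟩
  simpa using h

lemma q_step (n : ℕ) : q n < q (n+1) := by
  have hadj : J n + (∫ t in (n:ℝ)..((n:ℝ)+1), t ^ n * Real.exp (-t))
      = ∫ t in (0:ℝ)..((n:ℝ)+1), t ^ n * Real.exp (-t) :=
    intervalIntegral.integral_add_adjacent_intervals
      ((contF n).intervalIntegrable 0 n) ((contF n).intervalIntegrable n _)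
  have h1 : J (n+1) = ((n:ℝ)+1) * (∫ t in (0:ℝ)..((n:ℝ)+1), t ^ n * Real.exp (-t))
      - ((n:ℝ)+1) ^ (n+1) * Real.exp (-((n:ℝ)+1)) := by
    have := ibp ((n:ℝ)+1) n
    rw [J]; push_cast; exact this
  have h2 := key n
  have hF : (0:ℝ) < n.factorial := by positivity
  have hq : q (n+1) = q n
      + ((∫ t in (n:ℝ)..((n:ℝ)+1), t ^ n * Real.exp (-t))
          - ((n:ℝ)+1) ^ n * Real.exp (-((n:ℝ)+1))) / n.factorial := by
    rw [q, q, Nat.factorial_succ, h1, ← hadj]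
    have hpow : ((n:ℝ)+1) ^ (n+1) = ((n:ℝ)+1) ^ n * ((n:ℝ)+1) := pow_succ ((n:ℝ)+1) n
    push_cast
    rw [hpow]
    field_simp
    ring
  rw [hq]
  have := div_pos (sub_pos.mpr h2) hF
  linarith

lemma q_mono : StrictMono q := strictMono_nat_of_lt_succ q_step

lemma pdot_eq (n : ℕ) :
    lowerGamma (↑(n+1)) ((↑(n+1):ℝ) - 1) / Real.Gamma (↑(n+1)) = q n := by
  have hc : ((n+1:ℕ):ℝ) - 1 = (n:ℝ) := by push_cast; ring
  rw [lowerGamma, hc]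
  have hint : (∫ t in Set.Ioo (0:ℝ) (n:ℝ), t ^ ((n:ℕ):ℝ) * Real.exp (-t)) = J n := by
    rw [J, intervalIntegral.integral_of_le (Nat.cast_nonneg n),
      MeasureTheory.integral_Ioc_eq_integral_Ioo]
    apply MeasureTheory.setIntegral_congr_fun measurableSet_Ioo
    intro t _
    simp [Real.rpow_natCast]
  rw [hint, show ((n+1:ℕ):ℝ) = (n:ℝ)+1 by push_cast; ring,
    Real.Gamma_nat_eq_factorial, q]

theorem pdot_strictAnti (N M : ℕ) (hN : 1 ≤ N) (hNM : N < M) :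
    1 - lowerGamma M ((M : ℝ) - 1) / Real.Gamma M
      < 1 - lowerGamma N ((N : ℝ) - 1) / Real.Gamma N := by
  obtain ⟨n, rfl⟩ : ∃ n, N = n + 1 := ⟨N - 1, by omega⟩
  obtain ⟨m, rfl⟩ : ∃ m, M = m + 1 := ⟨M - 1, by omega⟩
  rw [pdot_eq n, pdot_eq m]
  have : n < m := by omega
  linarith [q_mono this]
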